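/- For all x, y ∈ ℝⁿ, d_±(x,y) ≤ d_+(x,y) ≤ d_±(x,y) + 2·min(Q̂(x), Q̂(y)), where Q̂(z) denotes the minimal gap min_{1≤j≤n−1}(sort(z)_{j+1} − sort(z)_j). -/

import Mathlib

/-- The nondecreasing rearrangement (sorting) of a vector. -/
noncomputable def sortVec {n : ℕ} (x : Fin n → ℝ) : Fin n → ℝ := x ∘ Tuple.sort x

/-- Q(x) = (∏_{i<j} sign(x_j - x_i)) · min_{i<j} |x_j - x_i|. -/
noncomputable def Qfun {n : ℕ} (x : Fin n → ℝ) : ℝ :=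
  (∏ i : Fin n, ∏ j ∈ Finset.Ioi i, Real.sign (x j - x i)) *
  sInf {d : ℝ | ∃ i j : Fin n, i < j ∧ d = |x j - x i|}

/-- Minimal adjacent gap min_{j} (x_{j+1} - x_j). -/
noncomputable def minGap {n : ℕ} (x : Fin n → ℝ) : ℝ :=
  sInf {d : ℝ | ∃ i j : Fin n, (i : ℕ) + 1 = (j : ℕ) ∧ d = x j - x i}

/-- d_±(x,y) = min_{σ ∈ S_n} ‖x - σy‖₁ where (σy)_i = y_{σ(i)}. -/
noncomputable def dpm {n : ℕ} (x y : Fin n → ℝ) : ℝ :=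
  Finset.univ.inf' Finset.univ_nonempty fun σ : Equiv.Perm (Fin n) => ∑ i, |x i - y (σ i)|

/-- d_+(x,y) = min_{σ ∈ A_n} ‖x - σy‖₁. -/
noncomputable def dplus {n : ℕ} (x y : Fin n → ℝ) : ℝ :=
  Finset.univ.inf' Finset.univ_nonempty fun σ : alternatingGroup (Fin n) =>
    ∑ i, |x i - y ((σ : Equiv.Perm (Fin n)) i)|

lemma minGap_exists {n : ℕ} (hn : 2 ≤ n) (z : Fin n → ℝ) :
    ∃ i j : Fin n, (i : ℕ) + 1 = (j : ℕ) ∧ minGap z = z j - z i := by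
  set S := {d : ℝ | ∃ i j : Fin n, (i : ℕ) + 1 = (j : ℕ) ∧ d = z j - z i} with hS
  have hfin : S.Finite :=
    Set.Finite.subset (Set.finite_range fun p : Fin n × Fin n => z p.2 - z p.1)
      (by rintro d ⟨i, j, -, rfl⟩; exact ⟨(i, j), rfl⟩)
  have hne : S.Nonempty :=
    ⟨z ⟨1, by omega⟩ - z ⟨0, by omega⟩, ⟨0, by omega⟩, ⟨1, by omega⟩, rfl, rfl⟩
  have hmem := hne.csInf_mem hfin
  obtain ⟨i, j, hij, hd⟩ := hmem
  exact ⟨i, j, hij, hd⟩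

lemma minGap_sort {n : ℕ} (hn : 2 ≤ n) (z : Fin n → ℝ) :
    ∃ p q : Fin n, p ≠ q ∧ 0 ≤ minGap (sortVec z) ∧
      |z p - z q| = minGap (sortVec z) := by
  obtain ⟨i, j, hij, hd⟩ := minGap_exists hn (sortVec z)
  have hij' : i < j := by rw [Fin.lt_def]; omega
  have hmono : Monotone (sortVec z) := Tuple.monotone_sort z
  have h0 : 0 ≤ minGap (sortVec z) := by
    rw [hd]; linarith [hmono hij'.le]
  refine ⟨Tuple.sort z i, Tuple.sort z j, fun h => hij'.ne ((Tuple.sort z).injective h),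
    h0, ?_⟩
  have : z (Tuple.sort z i) = sortVec z i := rfl
  have : z (Tuple.sort z j) = sortVec z j := rfl
  rw [show z (Tuple.sort z i) = sortVec z i from rfl,
    show z (Tuple.sort z j) = sortVec z j from rfl, hd, abs_sub_comm,
    abs_of_nonneg (by linarith [hmono hij'.le])]

lemma key_swap {n : ℕ} (x y : Fin n → ℝ) (σ : Equiv.Perm (Fin n)) (a b : Fin n)
    (hab : a ≠ b) (c : ℝ)
    (h : |x a - y (σ b)| + |x b - y (σ a)| ≤ |x a - y (σ a)| + |x b - y (σ b)| + 2 * c) :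
    ∑ i, |x i - y ((σ * Equiv.swap a b) i)| ≤ (∑ i, |x i - y (σ i)|) + 2 * c := by
  have hsum : ∑ i, (|x i - y ((σ * Equiv.swap a b) i)| - |x i - y (σ i)|)
      = (|x a - y (σ b)| - |x a - y (σ a)|) + (|x b - y (σ a)| - |x b - y (σ b)|) := by
    rw [← Finset.sum_subset (Finset.subset_univ ({a, b} : Finset (Fin n)))
      (by
        intro i _ hi
        simp only [Finset.mem_insert, Finset.mem_singleton, not_or] at hi
        simp [Equiv.Perm.mul_apply, Equiv.swap_apply_of_ne_of_ne hi.1 hi.2])]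
    rw [Finset.sum_pair hab]
    simp [Equiv.Perm.mul_apply, Equiv.swap_apply_left, Equiv.swap_apply_right]
  have hdist : ∑ i, (|x i - y ((σ * Equiv.swap a b) i)| - |x i - y (σ i)|)
      = (∑ i, |x i - y ((σ * Equiv.swap a b) i)|) - ∑ i, |x i - y (σ i)| :=
    Finset.sum_sub_distrib _ _
  linarith [hsum, hdist]

lemma dplus_le_of {n : ℕ} [NeZero n] (x y : Fin n → ℝ) (σ : Equiv.Perm (Fin n))
    (a b : Fin n) (hab : a ≠ b) (c : ℝ) (hc0 : 0 ≤ c)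
    (h : ∑ i, |x i - y ((σ * Equiv.swap a b) i)| ≤ (∑ i, |x i - y (σ i)|) + 2 * c) :
    dplus x y ≤ (∑ i, |x i - y (σ i)|) + 2 * c := by
  by_cases hσ : σ ∈ alternatingGroup (Fin n)
  · have h1 : dplus x y ≤ ∑ i, |x i - y (σ i)| :=
      Finset.inf'_le _ (Finset.mem_univ (⟨σ, hσ⟩ : alternatingGroup (Fin n)))
    linarith
  · have hσ' : σ * Equiv.swap a b ∈ alternatingGroup (Fin n) := by
      rw [Equiv.Perm.mem_alternatingGroup] at *
      rcases Int.units_eq_one_or (Equiv.Perm.sign σ) with h1 | h1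
      · exact absurd h1 hσ
      · rw [map_mul, Equiv.Perm.sign_swap hab, h1]; decide
    have h1 : dplus x y ≤ ∑ i, |x i - y ((σ * Equiv.swap a b) i)| :=
      Finset.inf'_le _ (Finset.mem_univ (⟨_, hσ'⟩ : alternatingGroup (Fin n)))
    linarith

theorem stmt16 (n : ℕ) (hn : 2 ≤ n) (x y : Fin n → ℝ) :
    dpm x y ≤ dplus x y ∧
    dplus x y ≤ dpm x y + 2 * min (minGap (sortVec x)) (minGap (sortVec y)) := by
  have : NeZero n := ⟨by omega⟩
  constructor
  · obtain ⟨τ, -, hτ⟩ := Finset.exists_mem_eq_inf' (Finset.univ_nonempty)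
      (fun σ : alternatingGroup (Fin n) =>
        ∑ i, |x i - y ((σ : Equiv.Perm (Fin n)) i)|)
    rw [dplus, hτ]
    exact Finset.inf'_le _ (Finset.mem_univ ((τ : Equiv.Perm (Fin n))))
  · obtain ⟨σ, -, hσ⟩ := Finset.exists_mem_eq_inf' (Finset.univ_nonempty)
      (fun σ : Equiv.Perm (Fin n) => ∑ i, |x i - y (σ i)|)
    have hx : dplus x y ≤ dpm x y + 2 * minGap (sortVec x) := by
      obtain ⟨a, b, hab, h0, habs⟩ := minGap_sort hn x
      rw [dpm, hσ]
      refine dplus_le_of x y σ a b hab _ h0 (key_swap x y σ a b hab _ ?_)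
      have t1 := abs_sub_le (x a) (x b) (y (σ b))
      have t2 := abs_sub_le (x b) (x a) (y (σ a))
      have : |x b - x a| = |x a - x b| := abs_sub_comm _ _
      linarith [habs]
    have hy : dplus x y ≤ dpm x y + 2 * minGap (sortVec y) := by
      obtain ⟨p, q, hpq, h0, habs⟩ := minGap_sort hn y
      set a := σ⁻¹ p
      set b := σ⁻¹ q
      have hab : a ≠ b := fun h => hpq (by simpa [a, b] using congrArg σ h)
      have hσa : σ a = p := by simp [a]
      have hσb : σ b = q := by simp [b]
      rw [dpm, hσ]
      refine dplus_le_of x y σ a b hab _ h0 (key_swap x y σ a b hab _ ?_)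
      rw [hσa, hσb]
      have t1 := abs_sub_le (x a) (y p) (y q)
      have t2 := abs_sub_le (x b) (y q) (y p)
      have : |y q - y p| = |y p - y q| := abs_sub_comm _ _
      linarith [habs]
    rcases le_total (minGap (sortVec x)) (minGap (sortVec y)) with h | h
    · rw [min_eq_left h]; exact hx
    · rw [min_eq_right h]; exact hy
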